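/- Let ψ : M₂(ℂ) → M₂(ℂ) be a linear map which is completely positive, i.e. for every n ≥ 1 and every matrix (x_{ij})_{i,j=1}^n with entries x_{ij} ∈ M₂(ℂ) that is positive semidefinite when regarded as a 2n×2n complex matrix, the matrix (ψ(x_{ij}))_{i,j=1}^n is positive semidefinite as a 2n×2n complex matrix. If ψ(x) = x for every x ∈ C₀, i.e. for every 2×2 matrix whose two diagonal entries are equal, then ψ(x) = x for every x ∈ M₂(ℂ). -/

import Mathlib

open scoped ComplexOrder

/-- Let `ψ : M₂(ℂ) → M₂(ℂ)` be a completely positive linear map (for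
every `n` and every `n×n` matrix `(x_{ij})` of `2×2` blocks which is positive
semidefinite as a `2n×2n` complex matrix, the blockwise image `(ψ(x_{ij}))` is positive
semidefinite).  If `ψ` is the identity on the operator system `C₀` of `2×2` matrices
with equal diagonal entries, then `ψ` is the identity on all of `M₂(ℂ)`. -/
theorem stmt18 (ψ : Matrix (Fin 2) (Fin 2) ℂ →ₗ[ℂ] Matrix (Fin 2) (Fin 2) ℂ)
    (hcp : ∀ (n : ℕ) (x : Fin n → Fin n → Matrix (Fin 2) (Fin 2) ℂ),
      (Matrix.of fun p q : Fin n × Fin 2 => x p.1 q.1 p.2 q.2).PosSemidef →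
      (Matrix.of fun p q : Fin n × Fin 2 => ψ (x p.1 q.1) p.2 q.2).PosSemidef)
    (hid : ∀ x : Matrix (Fin 2) (Fin 2) ℂ, x 0 0 = x 1 1 → ψ x = x) :
    ∀ x : Matrix (Fin 2) (Fin 2) ℂ, ψ x = x := by
  classical
  set u : Fin 2 → Fin 2 → Matrix (Fin 2) (Fin 2) ℂ :=
    fun i j => Matrix.of fun k l => (if i = k then 1 else 0) * (if j = l then 1 else 0) with hu
  have hpos : (Matrix.of fun p q : Fin 2 × Fin 2 => u p.1 q.1 p.2 q.2).PosSemidef := by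
    have h := Matrix.posSemidef_conjTranspose_mul_self
      (Matrix.of fun (_ : Fin 1) (p : Fin 2 × Fin 2) => if p.1 = p.2 then (1:ℂ) else 0)
    convert h using 1
    ext ⟨i,k⟩ ⟨j,l⟩
    simp only [Matrix.mul_apply, Matrix.conjTranspose_apply, Matrix.of_apply,
      Fin.sum_univ_one, u]
    fin_cases i <;> fin_cases k <;> fin_cases j <;> fin_cases l <;> simp
  have h1 : ψ 1 = 1 := hid 1 (by simp)
  have h01 : ψ (u 0 1) = u 0 1 := hid _ (by simp [hu])
  have h10 : ψ (u 1 0) = u 1 0 := hid _ (by simp [hu])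
  set A : Matrix (Fin 2) (Fin 2) ℂ := ψ (u 0 0) with hA
  have hsum : u 1 1 = 1 - u 0 0 := by
    ext k l; fin_cases k <;> fin_cases l <;> simp [hu, Matrix.one_apply]
  have h11 : ψ (u 1 1) = 1 - A := by rw [hsum, map_sub, h1, hA]
  have hN := hcp 2 u hpos
  have key : ∀ v : Fin 2 × Fin 2 → ℂ,
      0 ≤ ∑ p : Fin 2 × Fin 2, ∑ q : Fin 2 × Fin 2,
        (starRingEnd ℂ) (v p) * (ψ (u p.1 q.1) p.2 q.2 * v q) := by
    intro v
    have := hN.dotProduct_mulVec_nonneg v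
    simpa [dotProduct, Matrix.mulVec, Finset.mul_sum, mul_assoc] using this
  -- Hermitian relation for the off-diagonal entries of A
  have hb' : A 1 0 = star (A 0 1) := by
    have h := hN.1.apply ((0:Fin 2), (1:Fin 2)) ((0:Fin 2), (0:Fin 2))
    simpa [← hA] using h.symm
  -- diagonal inequalities
  have hd : (0:ℂ) ≤ A 1 1 := by
    have := key (fun p => if p = (0,1) then 1 else 0)
    simpa [Fintype.sum_prod_type, Fin.sum_univ_two, Prod.ext_iff, ← hA] using this
  have ha1 : A 0 0 ≤ 1 := by
    have := key (fun p => if p = (1,0) then 1 else 0)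
    simp only [Fintype.sum_prod_type, Fin.sum_univ_two, Prod.ext_iff] at this
    rw [← hA] at this
    simp only [h11, Matrix.sub_apply, Matrix.one_apply] at this
    norm_num at this
    exact this
  have hmix : (0:ℂ) ≤ A 0 0 - 2 + (1 - A 1 1) := by
    have := key (fun p => if p = (0,0) then 1 else if p = (1,1) then -1 else 0)
    simp only [Fintype.sum_prod_type, Fin.sum_univ_two, Prod.ext_iff] at this
    rw [← hA] at this
    simp only [h01, h10, h11] at this
    simp only [hu, Matrix.of_apply, Matrix.sub_apply, Matrix.one_apply] at this
    norm_num at this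
    calc (0:ℂ) ≤ _ := this
    _ = A 0 0 - 2 + (1 - A 1 1) := by ring
  have h1d : 1 + A 1 1 ≤ A 0 0 := by
    have h := add_le_add_left hmix (1 + A 1 1)
    calc (1:ℂ) + A 1 1 = 0 + (1 + A 1 1) := by ring
    _ ≤ (A 0 0 - 2 + (1 - A 1 1)) + (1 + A 1 1) := h
    _ = A 0 0 := by ring
  have haa : A 0 0 = 1 := by
    refine le_antisymm ha1 ?_
    calc (1:ℂ) = 1 + 0 := by ring
    _ ≤ 1 + A 1 1 := add_le_add_right hd 1
    _ ≤ A 0 0 := h1d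
  have hdd : A 1 1 = 0 := by
    rw [haa] at h1d
    refine le_antisymm ?_ hd
    calc A 1 1 = (1 + A 1 1) - 1 := by ring
    _ ≤ 1 - 1 := sub_le_sub_right h1d 1
    _ = 0 := by ring
  have hbb : A 0 1 = 0 := by
    have := key (fun p => if p = (0,0) then -(A 0 1) else if p = (0,1) then 1 else 0)
    simp only [Fintype.sum_prod_type, Fin.sum_univ_two, Prod.ext_iff] at this
    rw [← hA] at this
    norm_num at this
    rw [haa, hdd, hb'] at this
    have h0 : (0:ℂ) ≤ -(star (A 0 1) * A 0 1) := by
      calc (0:ℂ) ≤ _ := this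
      _ = -(star (A 0 1) * A 0 1) := by rw [Complex.star_def]; ring
    have hle : star (A 0 1) * A 0 1 ≤ 0 := by
      rwa [← neg_nonneg]
    have hz : star (A 0 1) * A 0 1 = 0 := le_antisymm hle (star_mul_self_nonneg _)
    rcases mul_eq_zero.mp hz with h | h
    · simpa using congrArg star h
    · exact h
  have hba : A 1 0 = 0 := by rw [hb', hbb, star_zero]
  have hAeq : A = u 0 0 := by
    ext k l
    fin_cases k <;> fin_cases l <;> simp [hu, haa, hdd, hbb, hba]
  intro x
  have hy : ψ (x - (x 0 0 - x 1 1) • u 0 0) = x - (x 0 0 - x 1 1) • u 0 0 := by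
    apply hid
    simp [hu, Matrix.sub_apply, Matrix.smul_apply]
  have h2 := map_sub ψ x ((x 0 0 - x 1 1) • u 0 0)
  rw [map_smul, ← hA, hAeq, hy] at h2
  exact sub_left_inj.mp h2.symm
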